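/- For every integer k > 3 there exists a constant C_k such that for every integer n > C_k and every real number ε with |ε| ≤ 1/(12k), there exists an n×⌊(k+ε)n⌋ complex matrix with (ℓ₁,t)-recoverability for every positive integer t ≤ √n/4. -/

import Mathlib

open scoped BigOperators

noncomputable def welch (n N : ℕ) : ℝ :=
  Real.sqrt (((N : ℝ) - n) / (((N : ℝ) - 1) * n))

/-- Normalised absolute inner product of columns `i` and `j` of `Φ`. -/
noncomputable def colCoh {m ι : Type*} [Fintype m] (Φ : Matrix m ι ℂ) (i j : ι) : ℝ :=
  ‖∑ r, (starRingEnd ℂ) (Φ r i) * Φ r j‖ /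
    (Real.sqrt (∑ r, ‖Φ r i‖ ^ 2) * Real.sqrt (∑ r, ‖Φ r j‖ ^ 2))

/-- `(ℓ₁,t)`-recoverability: every `t`-sparse `x` is the unique `ℓ₁`-minimizer among
solutions `z` of `Φ z = Φ x`. -/
def Recoverable {m ι : Type*} [Fintype m] [Fintype ι] [DecidableEq ι]
    (Φ : Matrix m ι ℂ) (t : ℕ) : Prop :=
  ∀ x : ι → ℂ, (Finset.univ.filter (fun i => x i ≠ 0)).card ≤ t →
    ∀ z : ι → ℂ, Φ.mulVec z = Φ.mulVec x → z ≠ x →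
      ∑ i, ‖x i‖ < ∑ i, ‖z i‖

/-! ### Auxiliary results on character sums over `ZMod p` -/

open Finset ZMod

section gauss
variable {p : ℕ} [Fact p.Prime]

lemma aux_norm_psi (u : ZMod p) : ‖ZMod.stdAddChar (N := p) u‖ = 1 := by
  rw [ZMod.stdAddChar_apply]
  exact Circle.norm_coe _

lemma aux_conj_psi (u : ZMod p) :
    (starRingEnd ℂ) (ZMod.stdAddChar (N := p) u) = ZMod.stdAddChar (N := p) (-u) := by
  rw [ZMod.stdAddChar_apply, ZMod.stdAddChar_apply, AddChar.map_neg_eq_inv,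
    ← Circle.coe_inv_eq_conj, Circle.coe_inv]

lemma aux_sum_psi_mul {B : ZMod p} (hB : B ≠ 0) :
    ∑ y : ZMod p, ZMod.stdAddChar (N := p) (B * y) = 0 := by
  have h := AddChar.sum_mulShift (R := ZMod p) (R' := ℂ) B (ZMod.isPrimitive_stdAddChar p)
  rw [if_neg hB] at h
  calc ∑ y : ZMod p, ZMod.stdAddChar (N := p) (B * y)
      = ∑ y : ZMod p, ZMod.stdAddChar (N := p) (y * B) := by simp [mul_comm]
  _ = 0 := by exact_mod_cast h

lemma aux_norm_sum_psi_sq (hp2 : p ≠ 2) {A : ZMod p} (hA : A ≠ 0) :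
    ‖∑ y : ZMod p, ZMod.stdAddChar (N := p) (A * y ^ 2)‖ = Real.sqrt p := by
  classical
  have hF : ringChar (ZMod p) ≠ 2 := by rw [ZMod.ringChar_zmod_n]; exact hp2
  set χ : MulChar (ZMod p) ℂ := (quadraticChar (ZMod p)).ringHomComp (Int.castRingHom ℂ)
    with hχdef
  have hχ1 : χ ≠ 1 :=
    (MulChar.ringHomComp_ne_one_iff (Int.cast_injective)).mpr (quadraticChar_ne_one hF)
  have hχ2 : χ.IsQuadratic := (quadraticChar_isQuadratic (ZMod p)).comp _
  have h1 : ∑ y : ZMod p, ZMod.stdAddChar (N := p) (A * y ^ 2)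
      = ∑ t : ZMod p, (χ t + 1) * ZMod.stdAddChar (N := p) (A * t) := by
    rw [← Finset.sum_fiberwise Finset.univ (fun y : ZMod p => y ^ 2)
      (fun y => ZMod.stdAddChar (N := p) (A * y ^ 2))]
    refine Finset.sum_congr rfl fun t _ => ?_
    have hco : ∀ y ∈ Finset.univ.filter (fun y : ZMod p => y ^ 2 = t),
        ZMod.stdAddChar (N := p) (A * y ^ 2) = ZMod.stdAddChar (N := p) (A * t) := by
      intro y hy
      rw [Finset.mem_filter] at hy
      rw [hy.2]
    rw [Finset.sum_congr rfl hco, Finset.sum_const, nsmul_eq_mul]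
    congr 1
    have hcard := quadraticChar_card_sqrts hF t
    have hset : ({x : ZMod p | x ^ 2 = t}.toFinset.card : ℤ) =
        (Finset.univ.filter (fun y : ZMod p => y ^ 2 = t)).card := by
      congr 1
      rw [Set.toFinset_setOf]
    rw [hset] at hcard
    have : ((Finset.univ.filter (fun y : ZMod p => y ^ 2 = t)).card : ℂ) =
        ((quadraticChar (ZMod p) t : ℤ) : ℂ) + 1 := by
      exact_mod_cast congrArg (Int.cast : ℤ → ℂ) hcard
    rw [this]
    rfl
  have h2 : ∑ t : ZMod p, (χ t + 1) * ZMod.stdAddChar (N := p) (A * t)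
      = gaussSum χ ((ZMod.stdAddChar).mulShift A) := by
    simp_rw [add_mul, one_mul, Finset.sum_add_distrib, aux_sum_psi_mul hA, add_zero, gaussSum,
      AddChar.mulShift_apply]
  have hψA : ((ZMod.stdAddChar (N := p)).mulShift A).IsPrimitive := by
    refine AddChar.IsPrimitive.of_ne_one ?_
    exact ZMod.isPrimitive_stdAddChar p hA
  have hsq := gaussSum_sq hχ1 hχ2 hψA
  have hnorm : ‖gaussSum χ ((ZMod.stdAddChar).mulShift A)‖ ^ 2 = p := by
    rw [← norm_pow, hsq]
    have hne : (-1 : ZMod p) ≠ 0 := neg_ne_zero.mpr one_ne_zero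
    have hcard : (Fintype.card (ZMod p) : ℂ) = (p : ℂ) := by rw [ZMod.card]
    have hχval : ‖χ (-1)‖ = 1 := by
      rcases quadraticChar_isQuadratic (ZMod p) (-1) with h | h | h
      · exact absurd (quadraticChar_eq_zero_iff.mp h) hne
      · rw [hχdef, MulChar.ringHomComp_apply, h]; norm_num
      · rw [hχdef, MulChar.ringHomComp_apply, h]; norm_num
    rw [norm_mul, hχval, one_mul, hcard, Complex.norm_natCast]
  rw [h1, h2, ← Real.sqrt_sq (norm_nonneg _), hnorm]

lemma aux_norm_sum_psi_quad (hp2 : p ≠ 2) {A B : ZMod p} (hAB : ¬(A = 0 ∧ B = 0)) :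
    ‖∑ y : ZMod p, ZMod.stdAddChar (N := p) (A * y ^ 2 + B * y)‖ ≤ Real.sqrt p := by
  rcases eq_or_ne A 0 with hA | hA
  · have hB : B ≠ 0 := fun hB => hAB ⟨hA, hB⟩
    simp only [hA, zero_mul, zero_add]
    rw [aux_sum_psi_mul hB]
    simpa using Real.sqrt_nonneg p
  · have h2 : (2 : ZMod p) ≠ 0 := by
      intro h
      have := (ZMod.natCast_eq_zero_iff 2 p).mp (by exact_mod_cast h)
      rcases (Nat.prime_dvd_prime_iff_eq (Fact.out) Nat.prime_two).mp this with h
      exact hp2 h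
    have h2A : (2 * A : ZMod p) ≠ 0 := mul_ne_zero h2 hA
    obtain ⟨c, hcc⟩ : ∃ c : ZMod p, 2 * A * c = B :=
      ⟨(2 * A)⁻¹ * B, by rw [← mul_assoc, mul_inv_cancel₀ h2A, one_mul]⟩
    have key : ∑ y : ZMod p, ZMod.stdAddChar (N := p) (A * y ^ 2 + B * y)
        = ZMod.stdAddChar (N := p) (A * c ^ 2 - B * c)
          * ∑ z : ZMod p, ZMod.stdAddChar (N := p) (A * z ^ 2) := by
      rw [Finset.mul_sum]
      refine Fintype.sum_equiv (Equiv.addRight c) _ _ fun z => ?_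
      rw [← AddChar.map_add_eq_mul]
      congr 1
      simp only [Equiv.coe_addRight]
      linear_combination (-z - c) * hcc
    rw [key, norm_mul, aux_norm_psi, one_mul, aux_norm_sum_psi_sq hp2 hA]

end gauss

/-! ### A generic coherence criterion for recoverability -/

lemma recoverable_of_coherence {n N : ℕ} (Φ : Matrix (Fin n) (Fin N) ℂ) (c μ : ℝ)
    (hc : 0 < c) (hμ : 0 ≤ μ)
    (hdiag : ∀ j, ∑ x, (starRingEnd ℂ) (Φ x j) * Φ x j = (c : ℂ))
    (hoff : ∀ i j, i ≠ j → ‖∑ x, (starRingEnd ℂ) (Φ x i) * Φ x j‖ ≤ μ)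
    (t : ℕ) (ht : 2 * t * μ < c) : Recoverable Φ t := by
  classical
  intro x hx z hz hne
  set v : Fin N → ℂ := fun i => z i - x i with hvdef
  have hv0 : Φ.mulVec v = 0 := by
    have : Φ.mulVec v = Φ.mulVec z - Φ.mulVec x := by
      rw [hvdef]; exact Matrix.mulVec_sub Φ z x
    rw [this, hz, sub_self]
  set T : ℝ := ∑ i, ‖v i‖ with hTdef
  have hvne : ∃ i, v i ≠ 0 := by
    by_contra h
    push_neg at h
    exact hne (funext fun i => sub_eq_zero.mp (h i))
  obtain ⟨i0, hi0⟩ := hvne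
  have hT : 0 < T := by
    have h1 : ‖v i0‖ ≤ T := Finset.single_le_sum (fun i _ => norm_nonneg (v i))
      (Finset.mem_univ i0)
    exact lt_of_lt_of_le (norm_pos_iff.mpr hi0) h1
  have key : ∀ i, c * ‖v i‖ ≤ μ * T := by
    intro i
    have h0 : ∑ j, (∑ r, (starRingEnd ℂ) (Φ r i) * Φ r j) * v j = 0 := by
      calc ∑ j, (∑ r, (starRingEnd ℂ) (Φ r i) * Φ r j) * v j
          = ∑ j, ∑ r, (starRingEnd ℂ) (Φ r i) * (Φ r j * v j) := by
            simp [Finset.sum_mul, mul_assoc]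
        _ = ∑ r, ∑ j, (starRingEnd ℂ) (Φ r i) * (Φ r j * v j) := Finset.sum_comm
        _ = ∑ r, (starRingEnd ℂ) (Φ r i) * (Φ.mulVec v r) := by
            simp [Matrix.mulVec, dotProduct, Finset.mul_sum]
        _ = 0 := by rw [hv0]; simp
    have hsp : (c : ℂ) * v i
        = -∑ j ∈ Finset.univ.erase i, (∑ r, (starRingEnd ℂ) (Φ r i) * Φ r j) * v j := by
      have h1 := Finset.add_sum_erase Finset.univ
        (fun j => (∑ r, (starRingEnd ℂ) (Φ r i) * Φ r j) * v j) (Finset.mem_univ i)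
      rw [h0, hdiag i] at h1
      exact eq_neg_of_add_eq_zero_left h1
    have h2 : c * ‖v i‖ ≤ ∑ j ∈ Finset.univ.erase i, μ * ‖v j‖ := by
      have hnorm : ‖(c : ℂ) * v i‖ = c * ‖v i‖ := by
        rw [norm_mul, Complex.norm_real, Real.norm_of_nonneg hc.le]
      calc c * ‖v i‖ = ‖(c : ℂ) * v i‖ := hnorm.symm
        _ = ‖∑ j ∈ Finset.univ.erase i, (∑ r, (starRingEnd ℂ) (Φ r i) * Φ r j) * v j‖ := by
            rw [hsp, norm_neg]
        _ ≤ ∑ j ∈ Finset.univ.erase i, ‖(∑ r, (starRingEnd ℂ) (Φ r i) * Φ r j) * v j‖ :=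
            norm_sum_le _ _
        _ ≤ ∑ j ∈ Finset.univ.erase i, μ * ‖v j‖ := by
            refine Finset.sum_le_sum fun j hj => ?_
            rw [norm_mul]
            exact mul_le_mul_of_nonneg_right
              (hoff i j fun h => (Finset.mem_erase.mp hj).1 h.symm) (norm_nonneg _)
    have h3 : ∑ j ∈ Finset.univ.erase i, μ * ‖v j‖ ≤ μ * T := by
      rw [← Finset.mul_sum]
      refine mul_le_mul_of_nonneg_left ?_ hμ
      rw [hTdef]
      exact Finset.sum_le_sum_of_subset_of_nonneg (Finset.erase_subset _ _)
        (fun j _ _ => norm_nonneg _)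
    exact h2.trans h3
  set S := Finset.univ.filter (fun i => x i ≠ 0) with hSdef
  set U : ℝ := ∑ i ∈ S, ‖v i‖ with hUdef
  have hU2 : 2 * U < T := by
    have hcU : c * U ≤ (S.card : ℝ) * (μ * T) := by
      rw [hUdef, Finset.mul_sum]
      calc ∑ i ∈ S, c * ‖v i‖ ≤ ∑ _i ∈ S, μ * T := Finset.sum_le_sum fun i _ => key i
        _ = (S.card : ℝ) * (μ * T) := by rw [Finset.sum_const, nsmul_eq_mul]
    have hcard : (S.card : ℝ) ≤ (t : ℝ) := by exact_mod_cast hx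
    have hμT : 0 ≤ μ * T := mul_nonneg hμ hT.le
    have h5 : (S.card : ℝ) * (μ * T) ≤ (t : ℝ) * (μ * T) :=
      mul_le_mul_of_nonneg_right hcard hμT
    have h7 : (2 * (t : ℝ) * μ) * T < c * T := mul_lt_mul_of_pos_right ht hT
    have h8 : c * (2 * U) < c * T := by nlinarith
    exact lt_of_mul_lt_mul_left h8 hc.le
  have hsplit : ∀ i, i ∉ S → x i = 0 := by
    intro i hi
    by_contra h
    exact hi (Finset.mem_filter.mpr ⟨Finset.mem_univ i, h⟩)
  have hzsum : ∑ i, ‖z i‖ ≥ ∑ i ∈ S, (‖x i‖ - ‖v i‖) + ∑ i ∈ Sᶜ, ‖v i‖ := by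
    rw [← Finset.sum_add_sum_compl S (fun i => ‖z i‖)]
    refine add_le_add (Finset.sum_le_sum fun i _ => ?_) (Finset.sum_le_sum fun i hi => ?_)
    · have hzi : z i = x i + v i := by rw [hvdef]; ring
      rw [hzi]
      have := norm_add_le (x i + v i) (-v i)
      simp only [add_neg_cancel_right, norm_neg] at this
      linarith
    · have hx0 : x i = 0 := hsplit i (Finset.mem_compl.mp hi)
      have : z i = v i := by rw [hvdef]; simp [hx0]
      rw [this]
  have hxsum : ∑ i, ‖x i‖ = ∑ i ∈ S, ‖x i‖ := by
    rw [← Finset.sum_add_sum_compl S (fun i => ‖x i‖)]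
    have : ∑ i ∈ Sᶜ, ‖x i‖ = 0 := Finset.sum_eq_zero fun i hi => by
      rw [hsplit i (Finset.mem_compl.mp hi), norm_zero]
    rw [this, add_zero]
  have hTsplit : T = U + ∑ i ∈ Sᶜ, ‖v i‖ := by
    rw [hTdef, hUdef, ← Finset.sum_add_sum_compl S (fun i => ‖v i‖)]
  have hsum_sub : ∑ i ∈ S, (‖x i‖ - ‖v i‖) = ∑ i ∈ S, ‖x i‖ - U := by
    rw [hUdef, Finset.sum_sub_distrib]
  rw [hxsum]
  have hcomp : ∑ i ∈ Sᶜ, ‖v i‖ = T - U := by linarith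
  rw [hsum_sub, hcomp] at hzsum
  linarith

/-! ### The chirp matrix -/

lemma sum_range_zmod {p : ℕ} [NeZero p] (G : ZMod p → ℂ) :
    ∑ m ∈ Finset.range p, G (m : ZMod p) = ∑ y : ZMod p, G y := by
  refine Finset.sum_nbij' (fun m => (m : ZMod p)) (fun y => y.val) ?_ ?_ ?_ ?_ ?_
  · intro a _; exact Finset.mem_univ _
  · intro y _; exact Finset.mem_range.mpr (ZMod.val_lt y)
  · intro a ha; exact ZMod.val_cast_of_lt (Finset.mem_range.mp ha)
  · intro y _; exact ZMod.natCast_zmod_val y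
  · intro a _; rfl

noncomputable def chirp (n N p : ℕ) [Fact p.Prime] : Matrix (Fin n) (Fin N) ℂ :=
  fun r j => if r.val < p then
    ZMod.stdAddChar (N := p) (((j.val / p : ℕ) : ZMod p) * ((r.val : ℕ) : ZMod p) ^ 2
      + ((j.val % p : ℕ) : ZMod p) * ((r.val : ℕ) : ZMod p))
  else 0

lemma chirp_gram {p : ℕ} [Fact p.Prime] {n N : ℕ} (hpn : p ≤ n) (i j : Fin N) :
    ∑ r : Fin n, (starRingEnd ℂ) (chirp n N p r i) * chirp n N p r j
      = ∑ y : ZMod p,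
          ZMod.stdAddChar (N := p)
            ((((j.val / p : ℕ) : ZMod p) - ((i.val / p : ℕ) : ZMod p)) * y ^ 2
              + (((j.val % p : ℕ) : ZMod p) - ((i.val % p : ℕ) : ZMod p)) * y) := by
  haveI : NeZero p := ⟨(Fact.out : p.Prime).ne_zero⟩
  set ai : ZMod p := ((i.val / p : ℕ) : ZMod p)
  set bi : ZMod p := ((i.val % p : ℕ) : ZMod p)
  set aj : ZMod p := ((j.val / p : ℕ) : ZMod p)
  set bj : ZMod p := ((j.val % p : ℕ) : ZMod p)
  have hterm : ∀ r : Fin n, (starRingEnd ℂ) (chirp n N p r i) * chirp n N p r j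
      = if r.val < p then
          ZMod.stdAddChar (N := p) ((aj - ai) * ((r.val : ℕ) : ZMod p) ^ 2
            + (bj - bi) * ((r.val : ℕ) : ZMod p)) else 0 := by
    intro r
    by_cases h : r.val < p
    · simp only [chirp, if_pos h, aux_conj_psi, ← AddChar.map_add_eq_mul]
      congr 1
      ring
    · simp [chirp, if_neg h]
  calc ∑ r : Fin n, (starRingEnd ℂ) (chirp n N p r i) * chirp n N p r j
      = ∑ m ∈ Finset.range n, (if m < p then
          ZMod.stdAddChar (N := p) ((aj - ai) * ((m : ℕ) : ZMod p) ^ 2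
            + (bj - bi) * ((m : ℕ) : ZMod p)) else 0) := by
        rw [Finset.sum_congr rfl fun r _ => hterm r]
        exact Fin.sum_univ_eq_sum_range (fun m => if m < p then
          ZMod.stdAddChar (N := p) ((aj - ai) * ((m : ℕ) : ZMod p) ^ 2
            + (bj - bi) * ((m : ℕ) : ZMod p)) else 0) n
    _ = ∑ m ∈ Finset.range p, (if m < p then
          ZMod.stdAddChar (N := p) ((aj - ai) * ((m : ℕ) : ZMod p) ^ 2
            + (bj - bi) * ((m : ℕ) : ZMod p)) else 0) := by
        refine (Finset.sum_subset (Finset.range_subset_range.mpr hpn) fun m _ hm => ?_).symm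
        rw [if_neg (fun h => hm (Finset.mem_range.mpr h))]
    _ = ∑ m ∈ Finset.range p,
          ZMod.stdAddChar (N := p) ((aj - ai) * ((m : ℕ) : ZMod p) ^ 2
            + (bj - bi) * ((m : ℕ) : ZMod p)) := by
        refine Finset.sum_congr rfl fun m hm => ?_
        rw [if_pos (Finset.mem_range.mp hm)]
    _ = ∑ y : ZMod p, ZMod.stdAddChar (N := p) ((aj - ai) * y ^ 2 + (bj - bi) * y) :=
        sum_range_zmod (fun y => ZMod.stdAddChar (N := p) ((aj - ai) * y ^ 2 + (bj - bi) * y))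

/-- For every integer `k > 3` there is a constant `C_k` such that for every
`n > C_k` and every real `ε` with `|ε| ≤ 1/(12k)`, there exists an
`n × ⌊(k+ε)n⌋` complex matrix with `(ℓ₁,t)`-recoverability for every positive
integer `t ≤ √n/4`. -/
theorem stmt_19 (k : ℕ) (hk : 3 < k) :
    ∃ C : ℕ, ∀ n : ℕ, C < n → ∀ ε : ℝ, |ε| ≤ 1 / (12 * (k : ℝ)) →
      ∃ Φ : Matrix (Fin n) (Fin ⌊((k : ℝ) + ε) * (n : ℝ)⌋₊) ℂ,
        ∀ t : ℕ, 0 < t → (t : ℝ) ≤ Real.sqrt n / 4 → Recoverable Φ t := by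
  refine ⟨8 * (k + 1), fun n hn ε hε => ?_⟩
  have hk4 : (4 : ℝ) ≤ (k : ℝ) := by exact_mod_cast hk
  have hε1 : |ε| ≤ 1 := by
    refine hε.trans ?_
    rw [div_le_one (by positivity)]
    nlinarith
  have hn41 : 41 ≤ n := by omega
  obtain ⟨p, hp, hp1, hp2⟩ := Nat.exists_prime_lt_and_le_two_mul (n / 2) (by omega)
  haveI : Fact p.Prime := ⟨hp⟩
  have hpn : p ≤ n := hp2.trans (by omega)
  have hgt : n < 2 * p := by omega
  have hpodd : p ≠ 2 := by omega
  have hp5 : 5 ≤ p := by omega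
  set N := ⌊((k : ℝ) + ε) * (n : ℝ)⌋₊ with hNdef
  have hgtR : (n : ℝ) < 2 * p := by exact_mod_cast hgt
  have hNpp : N ≤ p * p := by
    have hnN : (N : ℝ) ≤ ((k : ℝ) + 1) * n := by
      refine (Nat.floor_le (by nlinarith [abs_le.mp hε1, Nat.cast_nonneg (α := ℝ) n])).trans ?_
      have : ε ≤ 1 := (abs_le.mp hε1).2
      nlinarith [Nat.cast_nonneg (α := ℝ) n]
    have hn4k : 4 * ((k : ℝ) + 1) ≤ (n : ℝ) := by
      have h8 : 8 * (k + 1) < n := hn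
      have := (Nat.cast_lt (α := ℝ)).mpr h8
      push_cast at this ⊢
      nlinarith
    have h1 : ((k : ℝ) + 1) * n ≤ (n : ℝ) * n / 4 := by nlinarith [Nat.cast_nonneg (α := ℝ) n]
    have h2 : (n : ℝ) * n / 4 < (p : ℝ) * p := by nlinarith [Nat.cast_nonneg (α := ℝ) p]
    have : (N : ℝ) < ((p * p : ℕ) : ℝ) := by push_cast; linarith
    exact_mod_cast this.le
  refine ⟨chirp n N p, fun t ht htb => ?_⟩
  have hp0 : (0 : ℝ) < p := by positivity
  refine recoverable_of_coherence _ (p : ℝ) (Real.sqrt p) hp0 (Real.sqrt_nonneg _)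
    ?_ ?_ t ?_
  · -- diagonal entries
    intro j
    rw [chirp_gram hpn j j]
    simp only [sub_self, zero_mul, zero_add]
    rw [Finset.sum_congr rfl fun y _ => by rw [AddChar.map_zero_eq_one]]
    simp [ZMod.card]
  · -- off-diagonal entries
    intro i j hij
    rw [chirp_gram hpn i j]
    refine aux_norm_sum_psi_quad hpodd ?_
    rintro ⟨hA, hB⟩
    apply hij
    have hdivj : j.val / p < p := Nat.div_lt_of_lt_mul (lt_of_lt_of_le j.isLt hNpp)
    have hdivi : i.val / p < p := Nat.div_lt_of_lt_mul (lt_of_lt_of_le i.isLt hNpp)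
    have hmodj : j.val % p < p := Nat.mod_lt _ (by omega)
    have hmodi : i.val % p < p := Nat.mod_lt _ (by omega)
    have hA' : ((j.val / p : ℕ) : ZMod p) = ((i.val / p : ℕ) : ZMod p) := sub_eq_zero.mp hA
    have hB' : ((j.val % p : ℕ) : ZMod p) = ((i.val % p : ℕ) : ZMod p) := sub_eq_zero.mp hB
    have hdiv : j.val / p = i.val / p := by
      have := congrArg ZMod.val hA'
      rwa [ZMod.val_cast_of_lt hdivj, ZMod.val_cast_of_lt hdivi] at this
    have hmod : j.val % p = i.val % p := by
      have := congrArg ZMod.val hB'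
      rwa [ZMod.val_cast_of_lt hmodj, ZMod.val_cast_of_lt hmodi] at this
    apply Fin.ext
    calc i.val = p * (i.val / p) + i.val % p := (Nat.div_add_mod _ _).symm
      _ = p * (j.val / p) + j.val % p := by rw [hdiv, hmod]
      _ = j.val := Nat.div_add_mod _ _
  · -- numeric condition `2 t √p < p`
    have hsqn : Real.sqrt n < 2 * Real.sqrt p := by
      have h4p : (n : ℝ) < 4 * p := by linarith
      have : Real.sqrt n < Real.sqrt (4 * p) := by
        refine Real.sqrt_lt_sqrt (Nat.cast_nonneg n) h4p
      rwa [show (4 : ℝ) * p = (2 : ℝ) ^ 2 * p by ring, Real.sqrt_mul (by positivity),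
        Real.sqrt_sq (by norm_num : (0:ℝ) ≤ 2)] at this
    have hsp : (0 : ℝ) < Real.sqrt p := Real.sqrt_pos.mpr hp0
    have hts : (t : ℝ) < Real.sqrt p / 2 := by
      refine htb.trans_lt ?_
      linarith
    have hmul : Real.sqrt p * Real.sqrt p = (p : ℝ) := Real.mul_self_sqrt hp0.le
    nlinarith
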